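/- Let 0 < p ≤ 2, let {𝒞_k}_{k∈ℤ} be finite ½-sparse families of dyadic rectangles (only finitely many nonempty), and let λ(R), for R ∈ 𝒞 := ∪_k 𝒞_k, be the largest k with R ∈ 𝒞_k. Set f = Σ_{R∈𝒞} 2^{tλ(R)} |R|^{1/2} h_R for some t > 0. Then ‖S(f)‖_{L^p(ℝ²)}^p ≲ Σ_{k∈ℤ} 2^{ptk} |∪_{R∈𝒞_k} R|, with implicit constant depending only on p. -/

import Mathlib

open MeasureTheory Set
open scoped ENNReal Classical

noncomputable section

/-- The dyadic interval `[n·2^k, (n+1)·2^k)`, indexed by `p = (k, n)`. -/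
def dyadicI (p : ℤ × ℤ) : Set ℝ := Set.Ico ((p.2 : ℝ) * 2 ^ p.1) ((p.2 + 1 : ℝ) * 2 ^ p.1)

/-- The length `|I| = 2^k` of the dyadic interval indexed by `p = (k, n)`. -/
def dlen (p : ℤ × ℤ) : ℝ := (2 : ℝ) ^ p.1

/-- The `L²`-normalized Haar function of the dyadic interval indexed by `p = (k, n)`. -/
def haar (p : ℤ × ℤ) (x : ℝ) : ℝ :=
  (2 : ℝ) ^ (-(p.1 : ℝ) / 2) *
    ((dyadicI (p.1 - 1, 2 * p.2)).indicator 1 x - (dyadicI (p.1 - 1, 2 * p.2 + 1)).indicator 1 x)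

/-- The normalized indicator `χ_I/|I|`. -/
def nind (p : ℤ × ℤ) (x : ℝ) : ℝ := (dlen p)⁻¹ * (dyadicI p).indicator 1 x

/-- Index of a dyadic rectangle `R = I × J`. -/
abbrev RectIx : Type := (ℤ × ℤ) × (ℤ × ℤ)

/-- The dyadic rectangle `I × J`. -/
def dyadicR (r : RectIx) : Set (ℝ × ℝ) := (dyadicI r.1) ×ˢ (dyadicI r.2)

/-- The area `|R| = |I|·|J|`. -/
def rlen (r : RectIx) : ℝ := dlen r.1 * dlen r.2

/-- The rectangular Haar function `h_R = h_I ⊗ h_J`. -/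
def haarR (r : RectIx) (z : ℝ × ℝ) : ℝ := haar r.1 z.1 * haar r.2 z.2

/-- The rectangular Haar coefficient `f_R = ⟨f, h_R⟩`. -/
def haarCoefR (f : ℝ × ℝ → ℝ) (r : RectIx) : ℝ := ∫ z : ℝ × ℝ, f z * haarR r z

/-- The average of `g` over the dyadic rectangle `R`. -/
def avgR (g : ℝ × ℝ → ℝ) (r : RectIx) : ℝ := (rlen r)⁻¹ * ∫ z in dyadicR r, g z

/-- The average of `u` over the dyadic interval `I`. -/
def avgI (u : ℝ → ℝ) (p : ℤ × ℤ) : ℝ := (dlen p)⁻¹ * ∫ x in dyadicI p, u x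

/-- The Haar coefficient in the second variable, `f_J(x) = ⟨f(x,·), h_J⟩`. -/
def coefSnd (f : ℝ × ℝ → ℝ) (q : ℤ × ℤ) (x : ℝ) : ℝ := ∫ y : ℝ, f (x, y) * haar q y

/-- The Haar coefficient in the first variable, `f_I(y) = ⟨f(·,y), h_I⟩`. -/
def coefFst (f : ℝ × ℝ → ℝ) (p : ℤ × ℤ) (y : ℝ) : ℝ := ∫ x : ℝ, f (x, y) * haar p x

/-- The bi-parameter dyadic square function. -/
def sqR (f : ℝ × ℝ → ℝ) (z : ℝ × ℝ) : ℝ :=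
  Real.sqrt (∑' r : RectIx, (haarCoefR f r) ^ 2 * (rlen r)⁻¹ * (dyadicR r).indicator 1 z)

/-- The strong dyadic maximal function. -/
def strongMax (g : ℝ × ℝ → ℝ) (z : ℝ × ℝ) : ℝ :=
  ⨆ r : {r : RectIx // z ∈ dyadicR r}, |avgR g r.1|

/-- The one-parameter dyadic maximal function. -/
def dyadMax (u : ℝ → ℝ) (x : ℝ) : ℝ := ⨆ p : {p : ℤ × ℤ // x ∈ dyadicI p}, |avgI u p.1|

/-- `f` is a finite linear combination of indicators of dyadic intervals. -/
def IsDyadicSimple (f : ℝ → ℝ) : Prop :=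
  ∃ (s : Finset (ℤ × ℤ)) (c : ℤ × ℤ → ℝ),
    f = fun x => ∑ p ∈ s, c p * (dyadicI p).indicator 1 x

/-- `g` is a finite linear combination of indicators of dyadic rectangles. -/
def IsDyadicSimple2 (g : ℝ × ℝ → ℝ) : Prop :=
  ∃ (s : Finset RectIx) (c : RectIx → ℝ),
    g = fun z => ∑ r ∈ s, c r * (dyadicR r).indicator 1 z

/-- `f` is a finite linear combination of rectangular Haar functions. -/
def FinHaar2 (f : ℝ × ℝ → ℝ) : Prop :=
  ∃ (s : Finset RectIx) (c : RectIx → ℝ), f = fun z => ∑ r ∈ s, c r * haarR r z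

/-- The paraproduct `π²_g(f) = Σ_R f_R ⟨g⟩_R h_R`. -/
def pi2 (g f : ℝ × ℝ → ℝ) (z : ℝ × ℝ) : ℝ :=
  ∑' r : RectIx, haarCoefR f r * avgR g r * haarR r z

/-- The mixed paraproduct `π³_g(f) = Σ_{I,J} ⟨f_J⟩_I ⟨g_I⟩_J h_I ⊗ h_J`. -/
def pi3 (g f : ℝ × ℝ → ℝ) (z : ℝ × ℝ) : ℝ :=
  ∑' r : RectIx, avgI (coefSnd f r.2) r.1 * avgI (coefFst g r.1) r.2 * haarR r z

/-- The mixed paraproduct `π⁴_g(f) = Σ_{I,J} ⟨f_J⟩_I g_{I×J} h_I ⊗ χ̄_J`. -/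
def pi4 (g f : ℝ × ℝ → ℝ) (z : ℝ × ℝ) : ℝ :=
  ∑' r : RectIx, avgI (coefSnd f r.2) r.1 * haarCoefR g r * haar r.1 z.1 * nind r.2 z.2

/-- The mixed square-maximal operator `S₂M₁`. -/
def S2M1 (f : ℝ × ℝ → ℝ) (z : ℝ × ℝ) : ℝ :=
  Real.sqrt (∑' q : ℤ × ℤ,
    (dyadMax (coefSnd f q) z.1) ^ 2 * (dlen q)⁻¹ * (dyadicI q).indicator 1 z.2)

/-- The mixed maximal-square operator `M₂S₁`. -/
def M2S1 (g : ℝ × ℝ → ℝ) (z : ℝ × ℝ) : ℝ :=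
  ⨆ q : {q : ℤ × ℤ // z.2 ∈ dyadicI q},
    Real.sqrt (∑' p : ℤ × ℤ,
      (avgI (coefFst g p) q.1) ^ 2 * (dlen p)⁻¹ * (dyadicI p).indicator 1 z.1)

/-- The mixed maximal-square operator `M₁S₂`. -/
def M1S2 (f : ℝ × ℝ → ℝ) (z : ℝ × ℝ) : ℝ :=
  ⨆ p : {p : ℤ × ℤ // z.1 ∈ dyadicI p},
    Real.sqrt (∑' q : ℤ × ℤ,
      (avgI (coefSnd f q) p.1) ^ 2 * (dlen q)⁻¹ * (dyadicI q).indicator 1 z.2)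

/-- The `H^p_d(ℝ⊗ℝ)` quasi-norm `‖M(f)‖_{L^p}`. -/
def hpNorm (p : ℝ) (f : ℝ × ℝ → ℝ) : ℝ≥0∞ :=
  eLpNorm (strongMax f) (ENNReal.ofReal p) volume


namespace SqAux


lemma measurableSet_dyadicI (p : ℤ × ℤ) : MeasurableSet (dyadicI p) := measurableSet_Ico

lemma volume_dyadicI (p : ℤ × ℤ) : volume (dyadicI p) = ENNReal.ofReal ((2:ℝ) ^ p.1) := by
  rw [dyadicI, Real.volume_Ico]
  congr 1
  ring

lemma dyadic_nest {k k' n n' : ℤ} (hk : k' ≤ k)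
    (h : (dyadicI (k', n') ∩ dyadicI (k, n)).Nonempty) :
    dyadicI (k', n') ⊆ dyadicI (k, n) := by
  obtain ⟨x, hx', hx⟩ := h
  simp only [dyadicI, mem_Ico] at hx hx'
  obtain ⟨d, hd⟩ : ∃ d : ℕ, k = k' + d := ⟨(k - k').toNat, by omega⟩
  have h2k' : (0:ℝ) < 2 ^ k' := by positivity
  have hsplit : (2:ℝ) ^ k = 2 ^ k' * (2:ℝ) ^ (d:ℕ) := by
    rw [hd, zpow_add₀ (by norm_num : (2:ℝ) ≠ 0)]
    norm_num
  have h1 : (n:ℝ) * 2 ^ (d:ℕ) < n' + 1 := by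
    have hlt := lt_of_le_of_lt hx.1 hx'.2
    rw [hsplit] at hlt
    have e : (n:ℝ) * (2 ^ k' * 2 ^ (d:ℕ)) = ((n:ℝ) * 2 ^ (d:ℕ)) * 2 ^ k' := by ring
    rw [e] at hlt
    exact (mul_lt_mul_iff_of_pos_right h2k').mp hlt
  have h2 : (n':ℝ) < (n + 1) * 2 ^ (d:ℕ) := by
    have hlt := lt_of_le_of_lt hx'.1 hx.2
    rw [hsplit] at hlt
    have e : ((n:ℝ) + 1) * (2 ^ k' * 2 ^ (d:ℕ)) = (((n:ℝ) + 1) * 2 ^ (d:ℕ)) * 2 ^ k' := by ring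
    rw [e] at hlt
    exact (mul_lt_mul_iff_of_pos_right h2k').mp hlt
  have h1' : (n * 2 ^ d : ℤ) ≤ n' := by
    have : ((n * 2 ^ d : ℤ) : ℝ) < ((n' + 1 : ℤ) : ℝ) := by push_cast; exact h1
    exact_mod_cast Int.lt_add_one_iff.mp (by exact_mod_cast this)
  have h2' : (n' + 1 : ℤ) ≤ (n + 1) * 2 ^ d := by
    have : ((n' : ℤ) : ℝ) < (((n + 1) * 2 ^ d : ℤ) : ℝ) := by push_cast; exact h2
    exact_mod_cast Int.lt_iff_add_one_le.mp (by exact_mod_cast this)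
  intro y hy
  simp only [dyadicI, mem_Ico] at hy ⊢
  constructor
  · calc (n:ℝ) * 2 ^ k = (n * 2 ^ d : ℤ) * 2 ^ k' := by push_cast; rw [hsplit]; ring
    _ ≤ (n':ℝ) * 2 ^ k' := by
        have : ((n * 2 ^ d : ℤ):ℝ) ≤ (n':ℝ) := by exact_mod_cast h1'
        nlinarith
    _ ≤ y := hy.1
  · calc y < (n' + 1) * 2 ^ k' := hy.2
    _ ≤ ((n + 1) * 2 ^ d : ℤ) * 2 ^ k' := by
        have : ((n' + 1 : ℤ):ℝ) ≤ (((n + 1) * 2 ^ d : ℤ):ℝ) := by exact_mod_cast h2'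
        push_cast at this ⊢
        nlinarith
    _ = (n + 1 : ℝ) * 2 ^ k := by push_cast; rw [hsplit]; ring

lemma dyadicI_disjoint {k n n' : ℤ} (h : n ≠ n') :
    Disjoint (dyadicI (k, n)) (dyadicI (k, n')) := by
  rw [Set.disjoint_left]
  rintro x hx hx'
  simp only [dyadicI, mem_Ico] at hx hx'
  have h2k : (0:ℝ) < 2 ^ k := by positivity
  have c1 : (n:ℝ) < n' + 1 := (mul_lt_mul_iff_of_pos_right h2k).mp (lt_of_le_of_lt hx.1 hx'.2)
  have c2 : (n':ℝ) < n + 1 := (mul_lt_mul_iff_of_pos_right h2k).mp (lt_of_le_of_lt hx'.1 hx.2)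
  have d1 : n < n' + 1 := by exact_mod_cast c1
  have d2 : n' < n + 1 := by exact_mod_cast c2
  omega

lemma dyadicI_halves (k n : ℤ) :
    dyadicI (k - 1, 2 * n) ∪ dyadicI (k - 1, 2 * n + 1) = dyadicI (k, n) := by
  have hpos : (0:ℝ) < 2 ^ (k-1) := by positivity
  have h2 : (2:ℝ) ^ (k-1) * 2 = 2 ^ k := by
    rw [← zpow_add_one₀ (by norm_num : (2:ℝ) ≠ 0)]
    norm_num
  simp only [dyadicI]
  push_cast
  rw [Set.Ico_union_Ico_eq_Ico
    (mul_le_mul_of_nonneg_right (by linarith) hpos.le)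
    (mul_le_mul_of_nonneg_right (by linarith) hpos.le),
    show (2 * (n:ℝ)) * 2 ^ (k-1) = (n:ℝ) * 2 ^ k by linear_combination (n:ℝ) * h2,
    show (2 * (n:ℝ) + 1 + 1) * 2 ^ (k-1) = ((n:ℝ) + 1) * 2 ^ k by
      linear_combination ((n:ℝ) + 1) * h2]


lemma haar_zero_of_notMem {p : ℤ × ℤ} {x : ℝ} (hx : x ∉ dyadicI p) : haar p x = 0 := by
  have hu := dyadicI_halves p.1 p.2
  have h1 : x ∉ dyadicI (p.1 - 1, 2 * p.2) := fun h => hx (hu ▸ Set.mem_union_left _ h)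
  have h2 : x ∉ dyadicI (p.1 - 1, 2 * p.2 + 1) := fun h => hx (hu ▸ Set.mem_union_right _ h)
  simp [haar, Set.indicator_of_notMem h1, Set.indicator_of_notMem h2]

lemma measurable_haar (p : ℤ × ℤ) : Measurable (haar p) := by
  apply Measurable.const_mul
  exact ((measurable_const.indicator (measurableSet_dyadicI _)).sub
    (measurable_const.indicator (measurableSet_dyadicI _)))

lemma integrable_indicator_dyadicI (p : ℤ × ℤ) :
    Integrable ((dyadicI p).indicator (1 : ℝ → ℝ)) volume := by
  rw [integrable_indicator_iff (measurableSet_dyadicI p)]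
  exact integrableOn_const (by rw [volume_dyadicI]; exact ENNReal.ofReal_ne_top)

lemma integrable_haar (p : ℤ × ℤ) : Integrable (haar p) volume := by
  have : haar p = fun x => (2 : ℝ) ^ (-(p.1 : ℝ) / 2) *
      ((dyadicI (p.1 - 1, 2 * p.2)).indicator 1 x -
        (dyadicI (p.1 - 1, 2 * p.2 + 1)).indicator 1 x) := rfl
  rw [this]
  exact (((integrable_indicator_dyadicI _).sub (integrable_indicator_dyadicI _)).const_mul _)

lemma integral_indicator_dyadicI (p : ℤ × ℤ) :
    ∫ x, (dyadicI p).indicator (1 : ℝ → ℝ) x = (2:ℝ) ^ p.1 := by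
  rw [integral_indicator_one (measurableSet_dyadicI p), measureReal_def, volume_dyadicI,
    ENNReal.toReal_ofReal (by positivity)]

lemma integral_haar (p : ℤ × ℤ) : ∫ x, haar p x = 0 := by
  have : (fun x => haar p x) = fun x => (2 : ℝ) ^ (-(p.1 : ℝ) / 2) *
      ((dyadicI (p.1 - 1, 2 * p.2)).indicator 1 x -
        (dyadicI (p.1 - 1, 2 * p.2 + 1)).indicator 1 x) := rfl
  rw [this, integral_const_mul, integral_sub (integrable_indicator_dyadicI _)
    (integrable_indicator_dyadicI _), integral_indicator_dyadicI, integral_indicator_dyadicI]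
  simp

lemma abs_haar_le (p : ℤ × ℤ) (x : ℝ) :
    |haar p x| ≤ (2 : ℝ) ^ (-(p.1 : ℝ) / 2) * (dyadicI p).indicator 1 x := by
  by_cases hx : x ∈ dyadicI p
  · rw [Set.indicator_of_mem hx]
    rw [haar, abs_mul, abs_of_nonneg (by positivity : (0:ℝ) ≤ (2:ℝ) ^ (-(p.1:ℝ)/2))]
    have hb : |(dyadicI (p.1 - 1, 2 * p.2)).indicator (1 : ℝ → ℝ) x -
        (dyadicI (p.1 - 1, 2 * p.2 + 1)).indicator (1 : ℝ → ℝ) x| ≤ 1 := by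
      by_cases h1 : x ∈ dyadicI (p.1 - 1, 2 * p.2) <;>
        by_cases h2 : x ∈ dyadicI (p.1 - 1, 2 * p.2 + 1) <;>
        simp [Set.indicator_of_mem, Set.indicator_of_notMem, h1, h2]
    calc (2 : ℝ) ^ (-(p.1 : ℝ) / 2) * |_| ≤ (2 : ℝ) ^ (-(p.1 : ℝ) / 2) * 1 :=
          mul_le_mul_of_nonneg_left hb (by positivity)
      _ = _ := by simp
  · rw [haar_zero_of_notMem hx, Set.indicator_of_notMem hx]
    simp


lemma dyadicI_disjoint' {p q : ℤ × ℤ} (h1 : p.1 = q.1) (h2 : p ≠ q) :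
    Disjoint (dyadicI p) (dyadicI q) := by
  obtain ⟨k, n⟩ := p
  obtain ⟨k', n'⟩ := q
  simp only at h1
  subst h1
  exact dyadicI_disjoint (by rintro rfl; exact h2 rfl)

lemma haar_const_on {p q : ℤ × ℤ} (h : q.1 < p.1) :
    ∃ c : ℝ, ∀ x ∈ dyadicI q, haar p x = c := by
  have hk : q.1 ≤ p.1 - 1 := by omega
  have hq : dyadicI q = dyadicI (q.1, q.2) := by simp
  have hdisj : Disjoint (dyadicI (p.1 - 1, 2 * p.2)) (dyadicI (p.1 - 1, 2 * p.2 + 1)) :=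
    dyadicI_disjoint (by omega)
  by_cases hplus : (dyadicI (q.1, q.2) ∩ dyadicI (p.1 - 1, 2 * p.2)).Nonempty
  · have hsub : dyadicI q ⊆ dyadicI (p.1 - 1, 2 * p.2) := hq ▸ dyadic_nest hk hplus
    refine ⟨(2 : ℝ) ^ (-(p.1 : ℝ) / 2), fun x hx => ?_⟩
    have h1 : x ∈ dyadicI (p.1 - 1, 2 * p.2) := hsub hx
    have h2 : x ∉ dyadicI (p.1 - 1, 2 * p.2 + 1) := fun hh => (Set.disjoint_left.mp hdisj h1) hh
    simp [haar, Set.indicator_of_mem h1, Set.indicator_of_notMem h2]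
  · by_cases hminus : (dyadicI (q.1, q.2) ∩ dyadicI (p.1 - 1, 2 * p.2 + 1)).Nonempty
    · have hsub : dyadicI q ⊆ dyadicI (p.1 - 1, 2 * p.2 + 1) := hq ▸ dyadic_nest hk hminus
      refine ⟨-((2 : ℝ) ^ (-(p.1 : ℝ) / 2)), fun x hx => ?_⟩
      have h2 : x ∈ dyadicI (p.1 - 1, 2 * p.2 + 1) := hsub hx
      have h1 : x ∉ dyadicI (p.1 - 1, 2 * p.2) := fun hh => (Set.disjoint_right.mp hdisj h2) hh
      simp [haar, Set.indicator_of_mem h2, Set.indicator_of_notMem h1]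
    · refine ⟨0, fun x hx => ?_⟩
      have h1 : x ∉ dyadicI (p.1 - 1, 2 * p.2) := fun hh => hplus ⟨x, hq ▸ hx, hh⟩
      have h2 : x ∉ dyadicI (p.1 - 1, 2 * p.2 + 1) := fun hh => hminus ⟨x, hq ▸ hx, hh⟩
      simp [haar, Set.indicator_of_notMem h1, Set.indicator_of_notMem h2]

lemma integral_haar_mul_of_lt {p q : ℤ × ℤ} (h : q.1 < p.1) :
    ∫ x, haar p x * haar q x = 0 := by
  obtain ⟨c, hc⟩ := haar_const_on h
  have key : ∀ x, haar p x * haar q x = c * haar q x := by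
    intro x
    by_cases hx : x ∈ dyadicI q
    · rw [hc x hx]
    · rw [haar_zero_of_notMem hx, mul_zero, mul_zero]
  simp_rw [key]
  rw [integral_const_mul, integral_haar, mul_zero]

lemma integral_haar_mul_same_scale {p q : ℤ × ℤ} (h1 : p.1 = q.1) (h2 : p ≠ q) :
    ∫ x, haar p x * haar q x = 0 := by
  have hdisj := dyadicI_disjoint' h1 h2
  have key : ∀ x, haar p x * haar q x = 0 := by
    intro x
    by_cases hx : x ∈ dyadicI p
    · rw [haar_zero_of_notMem (fun hh => (Set.disjoint_left.mp hdisj hx) hh), mul_zero]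
    · rw [haar_zero_of_notMem hx, zero_mul]
  simp_rw [key]
  simp

lemma haar_self (p : ℤ × ℤ) : ∫ x, haar p x * haar p x = 1 := by
  have hdisj : Disjoint (dyadicI (p.1 - 1, 2 * p.2)) (dyadicI (p.1 - 1, 2 * p.2 + 1)) :=
    dyadicI_disjoint (by omega)
  have key : ∀ x, haar p x * haar p x =
      ((2 : ℝ) ^ (-(p.1 : ℝ) / 2) * (2 : ℝ) ^ (-(p.1 : ℝ) / 2)) *
        ((dyadicI (p.1 - 1, 2 * p.2)).indicator (1 : ℝ → ℝ) x +
          (dyadicI (p.1 - 1, 2 * p.2 + 1)).indicator (1 : ℝ → ℝ) x) := by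
    intro x
    by_cases hx1 : x ∈ dyadicI (p.1 - 1, 2 * p.2)
    · have hx2 : x ∉ dyadicI (p.1 - 1, 2 * p.2 + 1) := fun hh => (Set.disjoint_left.mp hdisj hx1) hh
      simp only [haar, Set.indicator_of_mem hx1, Set.indicator_of_notMem hx2, Pi.one_apply]
      ring
    · by_cases hx2 : x ∈ dyadicI (p.1 - 1, 2 * p.2 + 1) <;>
      · simp only [haar, Set.indicator_of_mem, Set.indicator_of_notMem, hx1, hx2, Pi.one_apply,
          not_false_iff]
        ring
  simp_rw [key]
  rw [integral_const_mul, integral_add (integrable_indicator_dyadicI _)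
    (integrable_indicator_dyadicI _), integral_indicator_dyadicI, integral_indicator_dyadicI]
  have e1 : (2 : ℝ) ^ (-(p.1 : ℝ) / 2) * (2 : ℝ) ^ (-(p.1 : ℝ) / 2) = ((2 : ℝ) ^ p.1)⁻¹ := by
    rw [← Real.rpow_add (by norm_num), show -(p.1 : ℝ) / 2 + -(p.1 : ℝ) / 2 = -(p.1 : ℝ) by ring,
      Real.rpow_neg (by norm_num), Real.rpow_intCast]
  have e2 : (2 : ℝ) ^ ((p.1 - 1, 2 * p.2).1) + (2 : ℝ) ^ ((p.1 - 1, 2 * p.2 + 1).1) =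
      2 ^ p.1 := by
    have := zpow_add_one₀ (by norm_num : (2:ℝ) ≠ 0) (p.1 - 1)
    simp only [sub_add_cancel] at this
    simp only []
    linarith
  rw [e1, e2]
  exact inv_mul_cancel₀ (by positivity)

lemma haar_ortho (p q : ℤ × ℤ) :
    ∫ x, haar p x * haar q x = if p = q then (1 : ℝ) else 0 := by
  rcases eq_or_ne p q with rfl | hne
  · rw [if_pos rfl]; exact haar_self p
  · rw [if_neg hne]
    rcases lt_trichotomy p.1 q.1 with h | h | h
    · have : ∀ x, haar p x * haar q x = haar q x * haar p x := fun x => mul_comm _ _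
      simp_rw [this]
      exact integral_haar_mul_of_lt h
    · exact integral_haar_mul_same_scale h hne
    · exact integral_haar_mul_of_lt h


lemma integrable_haar_mul (p q : ℤ × ℤ) : Integrable (fun x => haar p x * haar q x) volume := by
  apply Integrable.mono' (((integrable_indicator_dyadicI p).const_mul
    ((2 : ℝ) ^ (-(q.1 : ℝ) / 2) * (2 : ℝ) ^ (-(p.1 : ℝ) / 2))))
    (((measurable_haar p).mul (measurable_haar q)).aestronglyMeasurable)
  filter_upwards with x
  rw [Real.norm_eq_abs, Pi.mul_apply, abs_mul]
  have h1 := abs_haar_le p x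
  have h2 := abs_haar_le q x
  have h2' : |haar q x| ≤ (2 : ℝ) ^ (-(q.1 : ℝ) / 2) := by
    refine h2.trans ?_
    by_cases hx : x ∈ dyadicI q
    · simp [Set.indicator_of_mem hx]
    · rw [Set.indicator_of_notMem hx, mul_zero]
      positivity
  calc |haar p x| * |haar q x| ≤ ((2 : ℝ) ^ (-(p.1 : ℝ) / 2) * (dyadicI p).indicator 1 x) *
        (2 : ℝ) ^ (-(q.1 : ℝ) / 2) :=
      mul_le_mul h1 h2' (abs_nonneg _)
        (mul_nonneg (by positivity) (Set.indicator_nonneg (fun y _ => zero_le_one) x))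
    _ = (2 : ℝ) ^ (-(q.1 : ℝ) / 2) * (2 : ℝ) ^ (-(p.1 : ℝ) / 2) * (dyadicI p).indicator 1 x := by
      ring

lemma integrable_haarR_mul (r s : RectIx) :
    Integrable (fun z : ℝ × ℝ => haarR r z * haarR s z) volume := by
  have : (fun z : ℝ × ℝ => haarR r z * haarR s z) =
      fun z : ℝ × ℝ => (haar r.1 z.1 * haar s.1 z.1) * (haar r.2 z.2 * haar s.2 z.2) := by
    funext z; simp only [haarR]; ring
  rw [this, MeasureTheory.Measure.volume_eq_prod ℝ ℝ]
  exact (integrable_haar_mul r.1 s.1).mul_prod (integrable_haar_mul r.2 s.2)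

lemma haarR_ortho (r s : RectIx) :
    ∫ z : ℝ × ℝ, haarR r z * haarR s z = if r = s then (1 : ℝ) else 0 := by
  have : (fun z : ℝ × ℝ => haarR r z * haarR s z) =
      fun z : ℝ × ℝ => (haar r.1 z.1 * haar s.1 z.1) * (haar r.2 z.2 * haar s.2 z.2) := by
    funext z; simp only [haarR]; ring
  rw [this, MeasureTheory.Measure.volume_eq_prod ℝ ℝ]
  rw [show (∫ z : ℝ × ℝ, haar r.1 z.1 * haar s.1 z.1 * (haar r.2 z.2 * haar s.2 z.2)
        ∂(volume.prod volume)) =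
      (∫ x, haar r.1 x * haar s.1 x) * ∫ y, haar r.2 y * haar s.2 y from
    MeasureTheory.integral_prod_mul (fun x => haar r.1 x * haar s.1 x)
      (fun y => haar r.2 y * haar s.2 y)]
  rw [haar_ortho, haar_ortho]
  by_cases h1 : r.1 = s.1 <;> by_cases h2 : r.2 = s.2 <;>
    simp [h1, h2, Prod.ext_iff]

lemma haarCoefR_sum (s : Finset RectIx) (c : RectIx → ℝ) (r : RectIx) :
    haarCoefR (fun z => ∑ r' ∈ s, c r' * haarR r' z) r = if r ∈ s then c r else 0 := by
  unfold haarCoefR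
  have key : ∀ z : ℝ × ℝ, (∑ r' ∈ s, c r' * haarR r' z) * haarR r z
      = ∑ r' ∈ s, c r' * (haarR r' z * haarR r z) := by
    intro z
    rw [Finset.sum_mul]
    exact Finset.sum_congr rfl fun _ _ => by ring
  simp_rw [key]
  rw [integral_finset_sum _ (fun r' _ => (integrable_haarR_mul r' r).const_mul _)]
  have : ∀ r' ∈ s, ∫ z : ℝ × ℝ, c r' * (haarR r' z * haarR r z) =
      if r' = r then c r' else 0 := by
    intro r' _
    rw [MeasureTheory.integral_const_mul, haarR_ortho]
    split_ifs <;> simp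
  rw [Finset.sum_congr rfl this, Finset.sum_ite_eq' s r (fun r' => c r')]


lemma measurableSet_dyadicR (r : RectIx) : MeasurableSet (dyadicR r) :=
  (measurableSet_dyadicI r.1).prod (measurableSet_dyadicI r.2)

lemma rlen_pos (r : RectIx) : 0 < rlen r := by
  unfold rlen dlen; positivity

lemma volume_dyadicR (r : RectIx) : volume (dyadicR r) = ENNReal.ofReal (rlen r) := by
  rw [dyadicR, MeasureTheory.Measure.volume_eq_prod ℝ ℝ, MeasureTheory.Measure.prod_prod,
    volume_dyadicI, volume_dyadicI, ← ENNReal.ofReal_mul (by positivity)]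
  rfl

lemma sum_rpow_le {ι : Type*} {θ : ℝ} (hθ : 0 < θ) (hθ1 : θ ≤ 1) (s : Finset ι)
    (f : ι → ℝ≥0∞) : (∑ i ∈ s, f i) ^ θ ≤ ∑ i ∈ s, f i ^ θ := by
  classical
  induction s using Finset.induction with
  | empty => simp [ENNReal.zero_rpow_of_pos hθ]
  | insert _ _ h ih =>
      rw [Finset.sum_insert h, Finset.sum_insert h]
      exact le_trans (ENNReal.rpow_add_le_add_rpow _ _ hθ.le hθ1) (by gcongr)

lemma rpow_le_self {x : ℝ≥0∞} (hx : x = 0 ∨ 1 ≤ x) {θ : ℝ} (hθ : 0 < θ) (hθ1 : θ ≤ 1) :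
    x ^ θ ≤ x := by
  rcases hx with rfl | hx
  · rw [ENNReal.zero_rpow_of_pos hθ]
  · calc x ^ θ ≤ x ^ (1:ℝ) := ENNReal.rpow_le_rpow_of_exponent_le hx hθ1
    _ = x := ENNReal.rpow_one x


end SqAux

open SqAux

/-- For `0 < p ≤ 2`, finitely many finite `½`-sparse families `𝒞_k` of dyadic
rectangles, `λ(R)` the largest `k` with `R ∈ 𝒞_k`, and the test function
`f = Σ_{R∈𝒞} 2^{tλ(R)} |R|^{1/2} h_R`, one has
`‖S(f)‖_{L^p}^p ≲_p Σ_k 2^{ptk} |∪_{R∈𝒞_k} R|`. -/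
theorem sq_test_function_bound (p : ℝ) (hp0 : 0 < p) (hp2 : p ≤ 2) :
    ∃ C : ℝ, 0 < C ∧ ∀ t : ℝ, 0 < t →
      ∀ (𝒞 : ℤ → Finset RectIx) (lam : RectIx → ℤ) (E : ℤ → RectIx → Set (ℝ × ℝ)),
        {k : ℤ | (𝒞 k).Nonempty}.Finite →
        (∀ k, ∀ r ∈ 𝒞 k, MeasurableSet (E k r) ∧ E k r ⊆ dyadicR r ∧
          ENNReal.ofReal (rlen r / 2) ≤ volume (E k r)) →
        (∀ k, ((𝒞 k : Set RectIx)).PairwiseDisjoint (E k)) →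
        (∀ k, ∀ r ∈ 𝒞 k, k ≤ lam r) →
        (∀ r : RectIx, (∃ k, r ∈ 𝒞 k) → r ∈ 𝒞 (lam r)) →
        ∫⁻ z : ℝ × ℝ, (ENNReal.ofReal (sqR (fun w => ∑' r : RectIx,
              (if ∃ k, r ∈ 𝒞 k then (2 : ℝ) ^ (t * (lam r : ℝ)) * Real.sqrt (rlen r) else 0) *
                haarR r w) z)) ^ p ∂volume ≤
          ENNReal.ofReal C *
            ∑' k : ℤ, ENNReal.ofReal ((2 : ℝ) ^ (p * t * (k : ℝ))) *
              volume (⋃ r ∈ 𝒞 k, dyadicR r) := by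
  refine ⟨2, two_pos, ?_⟩
  intro t ht 𝒞 lam E hfin hE hdisjE hle hmax
  have hθ : 0 < p / 2 := by linarith
  have hθ1 : p / 2 ≤ 1 := by linarith
  classical
  set K : Finset ℤ := hfin.toFinset with hK
  set S : Finset RectIx := K.biUnion 𝒞 with hS
  have hmemS : ∀ r : RectIx, r ∈ S ↔ ∃ k, r ∈ 𝒞 k := by
    intro r
    simp only [hS, Finset.mem_biUnion, hK, Set.Finite.mem_toFinset, Set.mem_setOf_eq]
    constructor
    · rintro ⟨k, _, hk⟩; exact ⟨k, hk⟩
    · rintro ⟨k, hk⟩; exact ⟨k, ⟨r, hk⟩, hk⟩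
  set c : RectIx → ℝ := fun r => (2 : ℝ) ^ (t * (lam r : ℝ)) * Real.sqrt (rlen r) with hc
  have hf : (fun w => ∑' r : RectIx,
      (if ∃ k, r ∈ 𝒞 k then (2 : ℝ) ^ (t * (lam r : ℝ)) * Real.sqrt (rlen r) else 0) * haarR r w)
      = fun w => ∑ r ∈ S, c r * haarR r w := by
    funext w
    rw [tsum_eq_sum (s := S) ?_]
    · refine Finset.sum_congr rfl fun r hr => ?_
      rw [if_pos ((hmemS r).1 hr), hc]
    · intro r hr
      rw [if_neg (fun h => hr ((hmemS r).2 h)), zero_mul]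
  rw [hf]
  -- pointwise identity for the integrand
  have hpt : ∀ z : ℝ × ℝ,
      (ENNReal.ofReal (sqR (fun w => ∑ r ∈ S, c r * haarR r w) z)) ^ p
      = (∑ r ∈ S, ENNReal.ofReal ((2 : ℝ) ^ (2 * t * (lam r : ℝ)) *
          (dyadicR r).indicator 1 z)) ^ (p / 2) := by
    intro z
    have hT : ∀ r ∈ S, (haarCoefR (fun w => ∑ r' ∈ S, c r' * haarR r' w) r) ^ 2 * (rlen r)⁻¹ *
        (dyadicR r).indicator 1 z
        = (2 : ℝ) ^ (2 * t * (lam r : ℝ)) * (dyadicR r).indicator 1 z := by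
      intro r hr
      rw [haarCoefR_sum, if_pos hr]
      have h2 : ((2 : ℝ) ^ (t * (lam r : ℝ))) ^ (2 : ℕ) = (2 : ℝ) ^ (2 * t * (lam r : ℝ)) := by
        rw [← Real.rpow_natCast ((2 : ℝ) ^ (t * (lam r : ℝ))) 2,
          ← Real.rpow_mul (by norm_num : (0:ℝ) ≤ 2),
          show t * (lam r : ℝ) * ((2:ℕ) : ℝ) = 2 * t * (lam r : ℝ) by push_cast; ring]
      have h1 : (c r) ^ 2 = (2 : ℝ) ^ (2 * t * (lam r : ℝ)) * rlen r := by
        rw [hc]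
        simp only []
        rw [mul_pow, h2, Real.sq_sqrt (rlen_pos r).le]
      rw [h1, show (2:ℝ)^(2*t*(lam r:ℝ)) * rlen r * (rlen r)⁻¹ * (dyadicR r).indicator 1 z
          = ((2:ℝ)^(2*t*(lam r:ℝ))) * (rlen r * (rlen r)⁻¹) * (dyadicR r).indicator 1 z by ring,
        mul_inv_cancel₀ (rlen_pos r).ne', mul_one]
    have hTnn : 0 ≤ ∑ r ∈ S, (2 : ℝ) ^ (2 * t * (lam r : ℝ)) * (dyadicR r).indicator 1 z :=
      Finset.sum_nonneg fun r _ => mul_nonneg (Real.rpow_nonneg (by norm_num) _)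
        (Set.indicator_nonneg (fun _ _ => zero_le_one) _)
    rw [sqR]
    rw [tsum_eq_sum (s := S) (fun r hr => by
      rw [haarCoefR_sum, if_neg hr]
      simp)]
    have hofs : ENNReal.ofReal (∑ r ∈ S, (2 : ℝ) ^ (2 * t * (lam r : ℝ)) *
        (dyadicR r).indicator 1 z)
        = ∑ r ∈ S, ENNReal.ofReal ((2 : ℝ) ^ (2 * t * (lam r : ℝ)) *
            (dyadicR r).indicator 1 z) :=
      ENNReal.ofReal_sum_of_nonneg (fun r _ => mul_nonneg (Real.rpow_nonneg (by norm_num) _)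
        (Set.indicator_nonneg (fun _ _ => zero_le_one) _))
    rw [Finset.sum_congr rfl hT, Real.sqrt_eq_rpow,
      ← ENNReal.ofReal_rpow_of_nonneg hTnn (by norm_num : (0:ℝ) ≤ 1/2),
      ← ENNReal.rpow_mul, show (1:ℝ)/2 * p = p / 2 by ring, hofs]
  -- the counting functions
  set G : ℤ → (ℝ × ℝ) → ℝ≥0∞ :=
    fun k z => ∑ r ∈ 𝒞 k, (dyadicR r).indicator (1 : (ℝ × ℝ) → ℝ≥0∞) z with hG
  have hGmeas : ∀ k, Measurable (G k) := fun k =>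
    Finset.measurable_sum _ fun r _ => measurable_const.indicator (measurableSet_dyadicR r)
  have hFG : ∀ k, ∀ z : ℝ × ℝ, (∑ r ∈ 𝒞 k,
      ENNReal.ofReal ((2 : ℝ) ^ (2 * t * (k : ℝ)) * (dyadicR r).indicator 1 z))
      = ENNReal.ofReal ((2 : ℝ) ^ (2 * t * (k : ℝ))) * G k z := by
    intro k z
    rw [hG]
    simp only []
    rw [Finset.mul_sum]
    refine Finset.sum_congr rfl fun r _ => ?_
    by_cases hz : z ∈ dyadicR r
    · rw [Set.indicator_of_mem hz, Set.indicator_of_mem hz]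
      simp
    · rw [Set.indicator_of_notMem hz, Set.indicator_of_notMem hz]
      simp
  have hdouble : ∀ z : ℝ × ℝ,
      (∑ r ∈ S, ENNReal.ofReal ((2 : ℝ) ^ (2 * t * (lam r : ℝ)) * (dyadicR r).indicator 1 z))
      ≤ ∑ k ∈ K, ENNReal.ofReal ((2 : ℝ) ^ (2 * t * (k : ℝ))) * G k z := by
    intro z
    have e1 : (∑ r ∈ S, ENNReal.ofReal ((2 : ℝ) ^ (2 * t * (lam r : ℝ)) *
        (dyadicR r).indicator 1 z))
        = ∑ x ∈ S.image (fun r : RectIx => (⟨lam r, r⟩ : Σ _ : ℤ, RectIx)),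
            ENNReal.ofReal ((2 : ℝ) ^ (2 * t * (x.1 : ℝ)) * (dyadicR x.2).indicator 1 z) := by
      rw [Finset.sum_image (fun a _ b _ h => congrArg Sigma.snd h)]
    have hsub : S.image (fun r : RectIx => (⟨lam r, r⟩ : Σ _ : ℤ, RectIx)) ⊆
        K.sigma (fun k => 𝒞 k) := by
      intro x hx
      obtain ⟨r, hr, rfl⟩ := Finset.mem_image.mp hx
      have hrC : r ∈ 𝒞 (lam r) := hmax r ((hmemS r).1 hr)
      rw [Finset.mem_sigma]
      exact ⟨by rw [hK, Set.Finite.mem_toFinset]; exact ⟨r, hrC⟩, hrC⟩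
    calc _ = _ := e1
      _ ≤ ∑ x ∈ K.sigma (fun k => 𝒞 k),
          ENNReal.ofReal ((2 : ℝ) ^ (2 * t * (x.1 : ℝ)) * (dyadicR x.2).indicator 1 z) :=
        Finset.sum_le_sum_of_subset hsub
      _ = ∑ k ∈ K, ∑ r ∈ 𝒞 k,
          ENNReal.ofReal ((2 : ℝ) ^ (2 * t * (k : ℝ)) * (dyadicR r).indicator 1 z) :=
        Finset.sum_sigma _ _ _
      _ = _ := Finset.sum_congr rfl fun k _ => hFG k z
  -- constant manipulation
  have hconst : ∀ k : ℤ, (ENNReal.ofReal ((2 : ℝ) ^ (2 * t * (k : ℝ)))) ^ (p / 2)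
      = ENNReal.ofReal ((2 : ℝ) ^ (p * t * (k : ℝ))) := by
    intro k
    rw [ENNReal.ofReal_rpow_of_nonneg (Real.rpow_nonneg (by norm_num) _) hθ.le,
      ← Real.rpow_mul (by norm_num : (0:ℝ) ≤ 2),
      show 2 * t * (k : ℝ) * (p / 2) = p * t * (k : ℝ) by ring]
  -- dichotomy for G
  have hGdich : ∀ k, ∀ z : ℝ × ℝ, G k z = 0 ∨ 1 ≤ G k z := by
    intro k z
    by_cases hz : ∃ r ∈ 𝒞 k, z ∈ dyadicR r
    · obtain ⟨r, hr, hzr⟩ := hz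
      right
      calc (1 : ℝ≥0∞) = (dyadicR r).indicator (1 : (ℝ × ℝ) → ℝ≥0∞) z := by
            rw [Set.indicator_of_mem hzr]; rfl
        _ ≤ G k z := Finset.single_le_sum
            (f := fun r => (dyadicR r).indicator (1 : (ℝ × ℝ) → ℝ≥0∞) z)
            (fun _ _ => zero_le) hr
    · left
      refine Finset.sum_eq_zero fun r hr => ?_
      rw [Set.indicator_of_notMem (fun hzr => hz ⟨r, hr, hzr⟩)]
  -- integral of G
  have hGint : ∀ k, ∫⁻ z, (G k z) ^ (p / 2) ∂volume ≤
      2 * volume (⋃ r ∈ 𝒞 k, dyadicR r) := by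
    intro k
    calc ∫⁻ z, (G k z) ^ (p / 2) ∂volume ≤ ∫⁻ z, G k z ∂volume :=
        lintegral_mono fun z => rpow_le_self (hGdich k z) hθ hθ1
      _ = ∑ r ∈ 𝒞 k, volume (dyadicR r) := by
          rw [hG]
          simp only []
          rw [lintegral_finset_sum (𝒞 k)
            (f := fun r => (dyadicR r).indicator (1 : (ℝ × ℝ) → ℝ≥0∞))
            (fun r _ => measurable_const.indicator (measurableSet_dyadicR r))]
          exact Finset.sum_congr rfl fun r _ => lintegral_indicator_one (measurableSet_dyadicR r)
      _ ≤ ∑ r ∈ 𝒞 k, 2 * volume (E k r) := by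
          refine Finset.sum_le_sum fun r hr => ?_
          rw [volume_dyadicR, show rlen r = 2 * (rlen r / 2) by ring,
            ENNReal.ofReal_mul (by norm_num : (0:ℝ) ≤ 2), ENNReal.ofReal_ofNat]
          exact mul_le_mul_right (hE k r hr).2.2 _
      _ = 2 * ∑ r ∈ 𝒞 k, volume (E k r) := by rw [Finset.mul_sum]
      _ = 2 * volume (⋃ r ∈ 𝒞 k, E k r) := by
          rw [measure_biUnion_finset (hdisjE k) (fun r hr => (hE k r hr).1)]
      _ ≤ 2 * volume (⋃ r ∈ 𝒞 k, dyadicR r) := by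
          exact mul_le_mul_right (measure_mono (Set.iUnion₂_mono fun r hr => (hE k r hr).2.1)) _
  calc ∫⁻ z, (ENNReal.ofReal (sqR (fun w => ∑ r ∈ S, c r * haarR r w) z)) ^ p ∂volume
      = ∫⁻ z, (∑ r ∈ S, ENNReal.ofReal ((2 : ℝ) ^ (2 * t * (lam r : ℝ)) *
          (dyadicR r).indicator 1 z)) ^ (p / 2) ∂volume := lintegral_congr hpt
    _ ≤ ∫⁻ z, (∑ k ∈ K, ENNReal.ofReal ((2 : ℝ) ^ (2 * t * (k : ℝ))) * G k z) ^ (p / 2)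
        ∂volume := lintegral_mono fun z => ENNReal.rpow_le_rpow (hdouble z) hθ.le
    _ ≤ ∫⁻ z, ∑ k ∈ K, (ENNReal.ofReal ((2 : ℝ) ^ (2 * t * (k : ℝ))) * G k z) ^ (p / 2)
        ∂volume := lintegral_mono fun z => sum_rpow_le hθ hθ1 K _
    _ = ∑ k ∈ K, ∫⁻ z, (ENNReal.ofReal ((2 : ℝ) ^ (2 * t * (k : ℝ))) * G k z) ^ (p / 2)
        ∂volume := lintegral_finset_sum K fun k _ =>
          (measurable_const.mul (hGmeas k)).pow_const _
    _ = ∑ k ∈ K, ENNReal.ofReal ((2 : ℝ) ^ (p * t * (k : ℝ))) *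
        ∫⁻ z, (G k z) ^ (p / 2) ∂volume := by
          refine Finset.sum_congr rfl fun k _ => ?_
          have : ∀ z : ℝ × ℝ, (ENNReal.ofReal ((2 : ℝ) ^ (2 * t * (k : ℝ))) * G k z) ^ (p / 2)
              = ENNReal.ofReal ((2 : ℝ) ^ (p * t * (k : ℝ))) * (G k z) ^ (p / 2) := by
            intro z
            rw [ENNReal.mul_rpow_of_nonneg _ _ hθ.le, hconst k]
          rw [lintegral_congr this, lintegral_const_mul _ ((hGmeas k).pow_const _)]
    _ ≤ ∑ k ∈ K, ENNReal.ofReal ((2 : ℝ) ^ (p * t * (k : ℝ))) *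
        (2 * volume (⋃ r ∈ 𝒞 k, dyadicR r)) :=
        Finset.sum_le_sum fun k _ => mul_le_mul_right (hGint k) _
    _ = 2 * ∑ k ∈ K, ENNReal.ofReal ((2 : ℝ) ^ (p * t * (k : ℝ))) *
        volume (⋃ r ∈ 𝒞 k, dyadicR r) := by
          rw [Finset.mul_sum]
          exact Finset.sum_congr rfl fun k _ => by ring
    _ ≤ 2 * ∑' k : ℤ, ENNReal.ofReal ((2 : ℝ) ^ (p * t * (k : ℝ))) *
        volume (⋃ r ∈ 𝒞 k, dyadicR r) := mul_le_mul_right (ENNReal.sum_le_tsum K) _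
    _ = ENNReal.ofReal 2 * ∑' k : ℤ, ENNReal.ofReal ((2 : ℝ) ^ (p * t * (k : ℝ))) *
        volume (⋃ r ∈ 𝒞 k, dyadicR r) := by rw [ENNReal.ofReal_ofNat]

end
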